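/- A scalar function h : ℝᵐ × ℝᵐ → ℝ is isotropic (i.e. h(Qa, Qb) = h(a, b) for all orthogonal Q and all a, b) if and only if there exists a function H : ℝ × ℝ × ℝ → ℝ such that h(a, b) = H(a·a, b·b, a·b) for all a, b. -/

import Mathlib

open Matrix

section IsotropicAux

variable {m : ℕ}

lemma dot_mulVec_orth (Q : Matrix (Fin m) (Fin m) ℝ) (hQ : Qᵀ * Q = 1)
    (a b : Fin m → ℝ) : (Q *ᵥ a) ⬝ᵥ (Q *ᵥ b) = a ⬝ᵥ b := by
  have : a ⬝ᵥ ((Qᵀ * Q) *ᵥ b) = (Q *ᵥ a) ⬝ᵥ (Q *ᵥ b) := by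
    rw [← Matrix.mulVec_mulVec, Matrix.dotProduct_mulVec, Matrix.vecMul_transpose]
  rw [← this, hQ, Matrix.one_mulVec]

noncomputable def isoMatrix
    (f : EuclideanSpace ℝ (Fin m) →ₗᵢ[ℝ] EuclideanSpace ℝ (Fin m)) :
    Matrix (Fin m) (Fin m) ℝ :=
  LinearMap.toMatrix' ((WithLp.linearEquiv 2 ℝ (Fin m → ℝ)).toLinearMap ∘ₗ f.toLinearMap ∘ₗ
    (WithLp.linearEquiv 2 ℝ (Fin m → ℝ)).symm.toLinearMap)

lemma isoMatrix_mulVec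
    (f : EuclideanSpace ℝ (Fin m) →ₗᵢ[ℝ] EuclideanSpace ℝ (Fin m)) (v : Fin m → ℝ) :
    (isoMatrix f) *ᵥ v = (f (WithLp.toLp 2 v)).ofLp := by
  rw [isoMatrix, ← Matrix.toLin'_apply, Matrix.toLin'_toMatrix']
  rfl

lemma inner_eq_dot (a b : EuclideanSpace ℝ (Fin m)) :
    (inner ℝ a b : ℝ) = a.ofLp ⬝ᵥ b.ofLp := by
  simp [PiLp.inner_apply, dotProduct, mul_comm]

lemma isoMatrix_orth
    (f : EuclideanSpace ℝ (Fin m) →ₗᵢ[ℝ] EuclideanSpace ℝ (Fin m)) :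
    (isoMatrix f)ᵀ * (isoMatrix f) = 1 := by
  ext i j
  have key : ((isoMatrix f) *ᵥ (Pi.single i 1)) ⬝ᵥ ((isoMatrix f) *ᵥ (Pi.single j 1))
      = (Pi.single i 1 : Fin m → ℝ) ⬝ᵥ (Pi.single j 1) := by
    rw [isoMatrix_mulVec, isoMatrix_mulVec, ← inner_eq_dot,
      f.inner_map_map, inner_eq_dot]
  simp only [Matrix.mulVec_single_one, mul_one] at key
  have : ((isoMatrix f)ᵀ * (isoMatrix f)) i j
      = (fun k => isoMatrix f k i) ⬝ᵥ (fun k => isoMatrix f k j) := by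
    simp [Matrix.mul_apply, dotProduct, Matrix.transpose_apply]
  rw [this, show ((fun k => isoMatrix f k i) ⬝ᵥ fun k => isoMatrix f k j) = _ from key]
  by_cases hij : i = j <;>
    simp [Pi.single_apply, dotProduct, hij, Matrix.one_apply, eq_comm]

noncomputable def pairMap (a b : EuclideanSpace ℝ (Fin m)) :
    (Fin 2 → ℝ) →ₗ[ℝ] EuclideanSpace ℝ (Fin m) where
  toFun c := c 0 • a + c 1 • b
  map_add' c d := by simp [add_smul]; abel
  map_smul' r c := by simp [smul_smul, smul_add]

lemma pairMap_inner_self (a b : EuclideanSpace ℝ (Fin m)) (c : Fin 2 → ℝ) :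
    (inner ℝ (pairMap a b c) (pairMap a b c) : ℝ) =
      c 0 ^ 2 * inner ℝ a a + 2 * (c 0 * c 1) * inner ℝ a b + c 1 ^ 2 * inner ℝ b b := by
  simp only [pairMap, LinearMap.coe_mk, AddHom.coe_mk]
  rw [real_inner_add_add_self]
  simp only [real_inner_smul_left, real_inner_smul_right]
  ring

lemma exists_isometry (a b a' b' : EuclideanSpace ℝ (Fin m))
    (h1 : (inner ℝ a a : ℝ) = inner ℝ a' a') (h2 : (inner ℝ b b : ℝ) = inner ℝ b' b')
    (h3 : (inner ℝ a b : ℝ) = inner ℝ a' b') :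
    ∃ f : EuclideanSpace ℝ (Fin m) →ₗᵢ[ℝ] EuclideanSpace ℝ (Fin m), f a = a' ∧ f b = b' := by
  set F := pairMap a b with hF
  set G := pairMap a' b' with hG
  have hnorm : ∀ c : Fin 2 → ℝ, ‖F c‖ = ‖G c‖ := by
    intro c
    rw [norm_eq_sqrt_real_inner (F c), norm_eq_sqrt_real_inner (G c),
      pairMap_inner_self, pairMap_inner_self, h1, h2, h3]
  have hker : LinearMap.ker F ≤ LinearMap.ker G := by
    intro c hc
    rw [LinearMap.mem_ker] at hc ⊢
    have := hnorm c
    rw [hc, norm_zero] at this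
    exact norm_eq_zero.mp this.symm
  set e := F.quotKerEquivRange with he
  set L0 := (LinearMap.ker F).liftQ G hker with hL0
  set Lmap : LinearMap.range F →ₗ[ℝ] EuclideanSpace ℝ (Fin m) :=
    L0 ∘ₗ (e.symm : LinearMap.range F →ₗ[ℝ] _) with hLmap
  have hLF : ∀ c : Fin 2 → ℝ, Lmap ⟨F c, LinearMap.mem_range_self F c⟩ = G c := by
    intro c
    have h1' : e (Submodule.Quotient.mk c) = ⟨F c, LinearMap.mem_range_self F c⟩ := by
      apply Subtype.ext
      exact F.quotKerEquivRange_apply_mk c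
    have h2' : e.symm ⟨F c, LinearMap.mem_range_self F c⟩ = Submodule.Quotient.mk c := by
      rw [← h1', LinearEquiv.symm_apply_apply]
    simp [hLmap, h2', hL0]
  have hLnorm : ∀ x : LinearMap.range F, ‖Lmap x‖ = ‖x‖ := by
    rintro ⟨x, hx⟩
    obtain ⟨c, rfl⟩ := hx
    rw [hLF c]
    exact (hnorm c).symm
  set L : LinearMap.range F →ₗᵢ[ℝ] EuclideanSpace ℝ (Fin m) := ⟨Lmap, hLnorm⟩ with hL
  refine ⟨L.extend, ?_, ?_⟩
  · have ha : a = F ![1, 0] := by simp [hF, pairMap]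
    have : L.extend a = L ⟨F ![1,0], LinearMap.mem_range_self F _⟩ := by
      conv_lhs => rw [ha]
      exact L.extend_apply ⟨F ![1,0], LinearMap.mem_range_self F _⟩
    rw [this]
    show Lmap _ = a'
    rw [hLF]
    simp [hG, pairMap]
  · have hb : b = F ![0, 1] := by simp [hF, pairMap]
    have : L.extend b = L ⟨F ![0,1], LinearMap.mem_range_self F _⟩ := by
      conv_lhs => rw [hb]
      exact L.extend_apply ⟨F ![0,1], LinearMap.mem_range_self F _⟩
    rw [this]
    show Lmap _ = b'
    rw [hLF]
    simp [hG, pairMap]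

/-- Vectors with equal Gram data are related by an orthogonal matrix. -/
lemma exists_orthogonal_of_gram_eq (a b a' b' : Fin m → ℝ)
    (h1 : a ⬝ᵥ a = a' ⬝ᵥ a') (h2 : b ⬝ᵥ b = b' ⬝ᵥ b') (h3 : a ⬝ᵥ b = a' ⬝ᵥ b') :
    ∃ Q : Matrix (Fin m) (Fin m) ℝ, Qᵀ * Q = 1 ∧ Q *ᵥ a = a' ∧ Q *ᵥ b = b' := by
  obtain ⟨f, hfa, hfb⟩ := exists_isometry (m := m) (WithLp.toLp 2 a) (WithLp.toLp 2 b) (WithLp.toLp 2 a') (WithLp.toLp 2 b')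
    (by rw [inner_eq_dot, inner_eq_dot]; exact h1)
    (by rw [inner_eq_dot, inner_eq_dot]; exact h2)
    (by rw [inner_eq_dot, inner_eq_dot]; exact h3)
  exact ⟨isoMatrix f, isoMatrix_orth f,
    by rw [isoMatrix_mulVec]; exact congrArg WithLp.ofLp hfa,
      by rw [isoMatrix_mulVec]; exact congrArg WithLp.ofLp hfb⟩

end IsotropicAux

/-- A scalar function `h` of two vectors in ℝᵐ (m ≥ 2) is isotropic with respect to
orthogonal transformations if and only if it can be written as a function of
`a·a`, `b·b` and `a·b`. -/
theorem isotropic_iff_function_of_invariants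
    (m : ℕ) (hm : 2 ≤ m) (h : (Fin m → ℝ) → (Fin m → ℝ) → ℝ) :
    (∀ Q : Matrix (Fin m) (Fin m) ℝ, Qᵀ * Q = 1 →
        ∀ a b : Fin m → ℝ, h (Q.mulVec a) (Q.mulVec b) = h a b) ↔
      (∃ H : ℝ → ℝ → ℝ → ℝ, ∀ a b : Fin m → ℝ, h a b = H (a ⬝ᵥ a) (b ⬝ᵥ b) (a ⬝ᵥ b)) := by
  constructor
  · intro hiso
    classical
    refine ⟨fun x y z =>
      if hp : ∃ p : (Fin m → ℝ) × (Fin m → ℝ),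
          p.1 ⬝ᵥ p.1 = x ∧ p.2 ⬝ᵥ p.2 = y ∧ p.1 ⬝ᵥ p.2 = z
      then h hp.choose.1 hp.choose.2 else 0, ?_⟩
    intro a b
    have hp : ∃ p : (Fin m → ℝ) × (Fin m → ℝ),
        p.1 ⬝ᵥ p.1 = a ⬝ᵥ a ∧ p.2 ⬝ᵥ p.2 = b ⬝ᵥ b ∧ p.1 ⬝ᵥ p.2 = a ⬝ᵥ b :=
      ⟨(a, b), rfl, rfl, rfl⟩
    simp only [dif_pos hp]
    obtain ⟨g1, g2, g3⟩ := hp.choose_spec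
    obtain ⟨Q, hQ, hQa, hQb⟩ :=
      exists_orthogonal_of_gram_eq hp.choose.1 hp.choose.2 a b g1 g2 g3
    rw [← hiso Q hQ hp.choose.1 hp.choose.2, hQa, hQb]
  · rintro ⟨H, hH⟩ Q hQ a b
    rw [hH, hH, dot_mulVec_orth Q hQ, dot_mulVec_orth Q hQ, dot_mulVec_orth Q hQ]
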